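/- Let μ be a probability measure on the unit circle with infinite support, let φ_n be the orthonormal polynomials, and suppose the derived set of supp(μ) equals {τ} for some τ on the unit circle. Then for every bounded μ-measurable function f on the unit circle that is continuous at τ, lim_{n→∞} ∫ f·|φ_n|² dμ = f(τ). -/

import Mathlib

open MeasureTheory Filter

/-- The (closed) support of a measure on `ℂ`: points all of whose neighborhoods
have positive measure. -/
def measSupport (μ : Measure ℂ) : Set ℂ := {z : ℂ | ∀ U ∈ nhds z, 0 < μ U}

open Finset in
lemma aux_integrable_sq {μ : Measure ℂ} (φ : ℕ → Polynomial ℂ)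
    (horth : ∀ m n : ℕ,
      ∫ z, (φ n).eval z * (starRingEnd ℂ) ((φ m).eval z) ∂μ =
        if m = n then 1 else 0) (n : ℕ) :
    Integrable (fun z => (‖(φ n).eval z‖ ^ 2 : ℝ)) μ := by
  have h := horth n n
  simp only [if_pos rfl] at h
  have heq : (fun z => (φ n).eval z * (starRingEnd ℂ) ((φ n).eval z))
      = fun z => ((‖(φ n).eval z‖ ^ 2 : ℝ) : ℂ) := by
    funext z
    rw [Complex.mul_conj]
    simp [Complex.normSq_eq_norm_sq]
  rw [heq] at h
  have hint : Integrable (fun z => ((‖(φ n).eval z‖ ^ 2 : ℝ) : ℂ)) μ := by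
    by_contra h'
    rw [integral_undef h'] at h
    exact one_ne_zero h.symm
  have h2 : Integrable (fun z => ((‖(φ n).eval z‖ ^ 2 : ℝ) : ℂ).re) μ := hint.re
  simpa only [Complex.ofReal_re] using h2

open Finset in
lemma aux_integrable_sqC {μ : Measure ℂ} (φ : ℕ → Polynomial ℂ)
    (horth : ∀ m n : ℕ,
      ∫ z, (φ n).eval z * (starRingEnd ℂ) ((φ m).eval z) ∂μ =
        if m = n then 1 else 0) (n : ℕ) :
    Integrable (fun z => ((‖(φ n).eval z‖ ^ 2 : ℝ) : ℂ)) μ :=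
  (aux_integrable_sq φ horth n).ofReal

open Finset in
lemma aux_intC_one {μ : Measure ℂ} (φ : ℕ → Polynomial ℂ)
    (horth : ∀ m n : ℕ,
      ∫ z, (φ n).eval z * (starRingEnd ℂ) ((φ m).eval z) ∂μ =
        if m = n then 1 else 0) (n : ℕ) :
    ∫ z, ((‖(φ n).eval z‖ ^ 2 : ℝ) : ℂ) ∂μ = 1 := by
  have h := horth n n
  simp only [if_pos rfl] at h
  have heq : (fun z => (φ n).eval z * (starRingEnd ℂ) ((φ n).eval z))
      = fun z => ((‖(φ n).eval z‖ ^ 2 : ℝ) : ℂ) := by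
    funext z
    rw [Complex.mul_conj]
    simp [Complex.normSq_eq_norm_sq]
  rw [heq] at h
  exact h

open Finset in
lemma aux_intR_one {μ : Measure ℂ} (φ : ℕ → Polynomial ℂ)
    (horth : ∀ m n : ℕ,
      ∫ z, (φ n).eval z * (starRingEnd ℂ) ((φ m).eval z) ∂μ =
        if m = n then 1 else 0) (n : ℕ) :
    ∫ z, (‖(φ n).eval z‖ ^ 2 : ℝ) ∂μ = 1 := by
  have h := integral_re (aux_integrable_sqC φ horth n)
  rw [aux_intC_one φ horth n] at h
  simpa [← Complex.ofReal_pow] using h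

open Finset in
lemma aux_mul_conj {μ : Measure ℂ} (φ : ℕ → Polynomial ℂ)
    (hint : ∀ n, Integrable (fun z => (‖(φ n).eval z‖ ^ 2 : ℝ)) μ) (j k : ℕ) :
    Integrable (fun z => (φ j).eval z * (starRingEnd ℂ) ((φ k).eval z)) μ := by
  apply Integrable.mono'
    (g := fun z => ((‖(φ j).eval z‖ ^ 2 : ℝ) + (‖(φ k).eval z‖ ^ 2 : ℝ)) / 2)
  · exact ((hint j).add (hint k)).div_const 2
  · exact ((φ j).continuous.aestronglyMeasurable).mul
      (((φ k).continuous.star).aestronglyMeasurable)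
  · filter_upwards with z
    rw [norm_mul]
    have h1 : ‖(starRingEnd ℂ) ((φ k).eval z)‖ = ‖(φ k).eval z‖ := RCLike.norm_conj _
    rw [h1]
    nlinarith [sq_nonneg (‖(φ j).eval z‖ - ‖(φ k).eval z‖), norm_nonneg ((φ j).eval z),
      norm_nonneg ((φ k).eval z)]

open Finset in
lemma aux_christoffel {μ : Measure ℂ} [IsProbabilityMeasure μ] (φ : ℕ → Polynomial ℂ)
    (horth : ∀ m n : ℕ,
      ∫ z, (φ n).eval z * (starRingEnd ℂ) ((φ m).eval z) ∂μ =
        if m = n then 1 else 0)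
    (hmc : ∀ j k, Integrable (fun z => (φ j).eval z * (starRingEnd ℂ) ((φ k).eval z)) μ)
    (z : ℂ) (n : ℕ) :
    (μ {z}).toReal * (∑ k ∈ range (n+1), (‖(φ k).eval z‖ ^ 2 : ℝ)) ≤ 1 := by
  set p : ℕ → ℂ → ℂ := fun k w => (φ k).eval w with hp
  set K : ℂ → ℂ := fun w => ∑ k ∈ range (n+1), (starRingEnd ℂ) (p k z) * p k w with hK
  have hexp : (fun w => K w * (starRingEnd ℂ) (K w))
      = fun w => ∑ j ∈ range (n+1), ∑ k ∈ range (n+1),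
          ((starRingEnd ℂ) (p j z) * p k z) * (p j w * (starRingEnd ℂ) (p k w)) := by
    funext w
    rw [hK]
    simp only [map_sum, map_mul, Complex.conj_conj, Finset.sum_mul_sum]
    refine Finset.sum_congr rfl fun j _ => Finset.sum_congr rfl fun k _ => by ring
  have hKint : Integrable (fun w => K w * (starRingEnd ℂ) (K w)) μ := by
    rw [hexp]
    exact integrable_finset_sum _ fun j _ => integrable_finset_sum _ fun k _ =>
      ((hmc j k).const_mul _)
  have hval : ∫ w, K w * (starRingEnd ℂ) (K w) ∂μ
      = ∑ j ∈ range (n+1), ((‖p j z‖ ^ 2 : ℝ) : ℂ) := by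
    rw [hexp]
    rw [integral_finset_sum _ fun j _ => integrable_finset_sum _ fun k _ =>
      ((hmc j k).const_mul _)]
    have : ∀ j ∈ range (n+1),
        ∫ w, ∑ k ∈ range (n+1),
          ((starRingEnd ℂ) (p j z) * p k z) * (p j w * (starRingEnd ℂ) (p k w)) ∂μ
        = ((‖p j z‖ ^ 2 : ℝ) : ℂ) := by
      intro j hj
      rw [integral_finset_sum _ fun k _ => ((hmc j k).const_mul _)]
      have h2 : ∀ k ∈ range (n+1),
          ∫ w, ((starRingEnd ℂ) (p j z) * p k z) * (p j w * (starRingEnd ℂ) (p k w)) ∂μ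
          = if k = j then (starRingEnd ℂ) (p j z) * p j z else 0 := by
        intro k hk
        rw [integral_const_mul, horth k j]
        split_ifs with h
        · subst h; ring
        · ring
      rw [Finset.sum_congr rfl h2, Finset.sum_ite_eq' (range (n+1)) j
        (fun k => (starRingEnd ℂ) (p j z) * p j z)]
      rw [if_pos hj, mul_comm, Complex.mul_conj]
      simp [Complex.normSq_eq_norm_sq]
    rw [Finset.sum_congr rfl this]
  have hre : (fun w => K w * (starRingEnd ℂ) (K w)) = fun w => ((‖K w‖ ^ 2 : ℝ) : ℂ) := by
    funext w
    rw [Complex.mul_conj]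
    simp [Complex.normSq_eq_norm_sq]
  rw [hre] at hKint hval
  have hKR : Integrable (fun w => (‖K w‖ ^ 2 : ℝ)) μ := by
    have h2 := hKint.re
    simpa only [RCLike.re_to_complex, Complex.ofReal_re] using h2
  have hvalR : ∫ w, (‖K w‖ ^ 2 : ℝ) ∂μ = ∑ j ∈ range (n+1), (‖p j z‖ ^ 2 : ℝ) := by
    have h3 := integral_re hKint
    rw [hval] at h3
    simpa [← Complex.ofReal_pow] using h3
  set S : ℝ := ∑ j ∈ range (n+1), (‖p j z‖ ^ 2 : ℝ) with hS
  have hSnn : 0 ≤ S := Finset.sum_nonneg fun j _ => sq_nonneg _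
  have hKz : ‖K z‖ ^ 2 = S ^ 2 := by
    have : K z = ((S : ℝ) : ℂ) := by
      rw [hK, hS]
      push_cast
      refine Finset.sum_congr rfl fun k _ => ?_
      rw [mul_comm, Complex.mul_conj]
      simp [Complex.normSq_eq_norm_sq]
    rw [this, Complex.norm_real, Real.norm_eq_abs, abs_of_nonneg hSnn]
  have hsing : (μ {z}).toReal * S ^ 2 ≤ ∫ w, (‖K w‖ ^ 2 : ℝ) ∂μ := by
    have h1 : ∫ w in ({z} : Set ℂ), (‖K w‖ ^ 2 : ℝ) ∂μ = (μ {z}).toReal • (‖K z‖ ^ 2) :=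
      integral_singleton _ _
    have h2 := setIntegral_le_integral (s := ({z} : Set ℂ)) hKR
      (Eventually.of_forall fun w => sq_nonneg _)
    rw [h1, hKz] at h2
    simpa using h2
  rw [hvalR] at hsing
  have hm : 0 ≤ (μ {z}).toReal := ENNReal.toReal_nonneg
  rcases eq_or_lt_of_le hSnn with h | h
  · rw [← h]; simp
  · nlinarith

open Finset in
lemma aux_sq_tendsto {μ : Measure ℂ} [IsProbabilityMeasure μ] (φ : ℕ → Polynomial ℂ)
    (horth : ∀ m n : ℕ,
      ∫ z, (φ n).eval z * (starRingEnd ℂ) ((φ m).eval z) ∂μ =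
        if m = n then 1 else 0)
    {z : ℂ} (hz : 0 < μ {z}) :
    Tendsto (fun n => (‖(φ n).eval z‖ ^ 2 : ℝ)) atTop (nhds 0) := by
  have hmc := aux_mul_conj φ (aux_integrable_sq φ horth)
  have hm : 0 < (μ {z}).toReal := ENNReal.toReal_pos hz.ne' (measure_ne_top μ _)
  have hb : ∀ N, ∑ k ∈ range N, (‖(φ k).eval z‖ ^ 2 : ℝ) ≤ 1 / (μ {z}).toReal := by
    intro N
    cases N with
    | zero => simp
    | succ n =>
      have h := aux_christoffel φ horth hmc z n
      rw [le_div_iff₀ hm, mul_comm]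
      exact h
  have hsumm : Summable (fun k => (‖(φ k).eval z‖ ^ 2 : ℝ)) :=
    summable_of_sum_range_le (fun k => sq_nonneg _) hb
  exact hsumm.tendsto_atTop_zero

lemma aux_closed (μ : Measure ℂ) : IsClosed (measSupport μ) := by
  rw [← isOpen_compl_iff, isOpen_iff_mem_nhds]
  intro z hz
  simp only [measSupport, Set.mem_compl_iff, Set.mem_setOf_eq, not_forall] at hz
  obtain ⟨U, hU, hU0⟩ := hz
  have hU0' : μ U = 0 := by simpa using hU0
  have hint : interior U ∈ nhds z := interior_mem_nhds.2 hU
  filter_upwards [hint] with w hw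
  simp only [measSupport, Set.mem_compl_iff, Set.mem_setOf_eq, not_forall]
  refine ⟨interior U, isOpen_interior.mem_nhds hw, ?_⟩
  have : μ (interior U) = 0 := measure_mono_null interior_subset hU0'
  simp [this]

lemma aux_sub (μ : Measure ℂ) (hcirc : μ (Metric.sphere (0 : ℂ) 1)ᶜ = 0) :
    measSupport μ ⊆ Metric.sphere (0 : ℂ) 1 := by
  intro z hz
  by_contra hzs
  have : (Metric.sphere (0 : ℂ) 1)ᶜ ∈ nhds z :=
    (Metric.isClosed_sphere.isOpen_compl).mem_nhds hzs
  have := hz _ this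
  rw [hcirc] at this
  exact lt_irrefl _ this

lemma aux_null (μ : Measure ℂ) : μ (measSupport μ)ᶜ = 0 := by
  apply measure_null_of_locally_null
  intro x hx
  simp only [measSupport, Set.mem_compl_iff, Set.mem_setOf_eq, not_forall] at hx
  obtain ⟨U, hU, hU0⟩ := hx
  exact ⟨U, mem_nhdsWithin_of_mem_nhds hU, by simpa using hU0⟩

lemma aux_atom (μ : Measure ℂ) (τ : ℂ)
    (hder : {z : ℂ | AccPt z (Filter.principal (measSupport μ))} = {τ})
    {z : ℂ} (hz : z ∈ measSupport μ) (hzτ : z ≠ τ) : 0 < μ {z} := by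
  have hnacc : ¬ AccPt z (Filter.principal (measSupport μ)) := by
    intro h
    have : z ∈ ({τ} : Set ℂ) := hder ▸ h
    exact hzτ (by simpa using this)
  rw [accPt_iff_nhds] at hnacc
  push_neg at hnacc
  obtain ⟨U, hU, hUz⟩ := hnacc
  have hsub : U ⊆ {z} ∪ (measSupport μ)ᶜ := by
    intro y hy
    by_cases hys : y ∈ measSupport μ
    · left; exact hUz y ⟨hy, hys⟩
    · right; exact hys
  have h1 : 0 < μ U := hz U hU
  have h2 : μ U ≤ μ {z} + μ (measSupport μ)ᶜ := le_trans (measure_mono hsub) (measure_union_le _ _)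
  rw [aux_null μ, add_zero] at h2
  exact lt_of_lt_of_le h1 h2

lemma aux_finite (μ : Measure ℂ) (hcirc : μ (Metric.sphere (0 : ℂ) 1)ᶜ = 0) (τ : ℂ)
    (hder : {z : ℂ | AccPt z (Filter.principal (measSupport μ))} = {τ})
    {δ : ℝ} (hδ : 0 < δ) : (measSupport μ \ Metric.ball τ δ).Finite := by
  by_contra hinf
  replace hinf : (measSupport μ \ Metric.ball τ δ).Infinite := hinf
  obtain ⟨x, -, hacc⟩ := hinf.exists_accPt_of_subset_isCompact (isCompact_sphere (0 : ℂ) 1)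
    ((Set.diff_subset).trans (aux_sub μ hcirc))
  have haccS : AccPt x (Filter.principal (measSupport μ)) :=
    hacc.mono (principal_mono.2 Set.diff_subset)
  have hxτ : x = τ := by
    have : x ∈ ({τ} : Set ℂ) := hder ▸ haccS
    simpa using this
  rw [hxτ] at hacc
  have hclosedF : IsClosed (measSupport μ \ Metric.ball τ δ) := by
    rw [Set.diff_eq]
    exact (aux_closed μ).inter Metric.isOpen_ball.isClosed_compl
  have hxF : τ ∈ measSupport μ \ Metric.ball τ δ := by
    rw [← hclosedF.closure_eq]
    exact mem_closure_iff_clusterPt.2 (AccPt.clusterPt hacc)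
  exact hxF.2 (Metric.mem_ball_self hδ)

theorem stmt15 (μ : Measure ℂ) [IsProbabilityMeasure μ]
    (hcirc : μ (Metric.sphere (0 : ℂ) 1)ᶜ = 0)
    (hinf : (measSupport μ).Infinite)
    (φ : ℕ → Polynomial ℂ)
    (hdeg : ∀ n, (φ n).natDegree = n)
    (hlead : ∀ n, 0 < ((φ n).leadingCoeff).re ∧ ((φ n).leadingCoeff).im = 0)
    (horth : ∀ m n : ℕ,
      ∫ z, (φ n).eval z * (starRingEnd ℂ) ((φ m).eval z) ∂μ =
        if m = n then 1 else 0)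
    (τ : ℂ) (hτ : ‖τ‖ = 1)
    (hder : {z : ℂ | AccPt z (Filter.principal (measSupport μ))} = {τ}) :
    ∀ f : ℂ → ℂ, AEStronglyMeasurable f μ →
      (∃ C : ℝ, ∀ z ∈ Metric.sphere (0 : ℂ) 1, ‖f z‖ ≤ C) →
      ContinuousAt f τ →
      Tendsto (fun n : ℕ => ∫ z, f z * (‖(φ n).eval z‖ ^ 2 : ℝ) ∂μ) atTop (nhds (f τ)) := by
  intro f hmeas hbdd hcont
  obtain ⟨C, hC⟩ := hbdd
  have hint_sq := aux_integrable_sq φ horth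
  have hintC := aux_integrable_sqC φ horth
  -- a.e. bound on f
  have hsae : ∀ᵐ z ∂μ, z ∈ Metric.sphere (0 : ℂ) 1 := by
    rw [ae_iff]
    exact hcirc
  have hfae : ∀ᵐ z ∂μ, ‖f z‖ ≤ C := by
    filter_upwards [hsae] with z hz using hC z hz
  have hgae : ∀ᵐ z ∂μ, ‖f z - f τ‖ ≤ C + ‖f τ‖ := by
    filter_upwards [hfae] with z hz
    calc ‖f z - f τ‖ ≤ ‖f z‖ + ‖f τ‖ := norm_sub_le _ _
      _ ≤ C + ‖f τ‖ := by linarith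
  have hintf : ∀ n, Integrable (fun z => f z * ((‖(φ n).eval z‖ ^ 2 : ℝ) : ℂ)) μ :=
    fun n => (hintC n).bdd_mul hmeas hfae
  have hintg : ∀ n, Integrable (fun z => (f z - f τ) * ((‖(φ n).eval z‖ ^ 2 : ℝ) : ℂ)) μ :=
    fun n => (hintC n).bdd_mul (hmeas.sub aestronglyMeasurable_const) hgae
  -- reduction to the difference tending to zero
  have hzero : Tendsto (fun n : ℕ =>
      ∫ z, (f z - f τ) * ((‖(φ n).eval z‖ ^ 2 : ℝ) : ℂ) ∂μ) atTop (nhds 0) := by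
    rw [NormedAddCommGroup.tendsto_nhds_zero]
    intro ε hε
    obtain ⟨δ, hδ, hδc⟩ := Metric.continuousAt_iff.1 hcont (ε/3) (by positivity)
    have hB : MeasurableSet (Metric.ball τ δ) := measurableSet_ball
    have hFfin : (measSupport μ \ Metric.ball τ δ).Finite := aux_finite μ hcirc τ hder hδ
    set Fs : Finset ℂ := hFfin.toFinset with hFs
    have hFscoe : (↑Fs : Set ℂ) = measSupport μ \ Metric.ball τ δ := hFfin.coe_toFinset
    -- the complement of the ball agrees a.e. with the finite set F
    have hae : ((Metric.ball τ δ)ᶜ : Set ℂ) =ᵐ[μ] (measSupport μ \ Metric.ball τ δ : Set ℂ) := by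
      rw [Filter.eventuallyEq_set]
      have h1 : μ {z : ℂ | ¬ (z ∈ (Metric.ball τ δ)ᶜ ↔
          z ∈ measSupport μ \ Metric.ball τ δ)} = 0 := by
        refine measure_mono_null ?_ (aux_null μ)
        intro z hz
        simp only [Set.mem_setOf_eq, Set.mem_compl_iff, Set.mem_diff] at hz ⊢
        intro hzs
        apply hz
        constructor
        · intro h; exact ⟨hzs, h⟩
        · intro h; exact h.2
      rw [ae_iff]
      convert h1 using 2
    -- eventually the finite-set part is small
    have htermF : Tendsto (fun n : ℕ => ∑ z ∈ Fs,
        (μ {z}).toReal • ((f z - f τ) * ((‖(φ n).eval z‖ ^ 2 : ℝ) : ℂ))) atTop (nhds 0) := by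
      have : (0 : ℂ) = ∑ z ∈ Fs, 0 := by simp
      rw [this]
      apply tendsto_finset_sum
      intro z hz
      rw [hFs, Set.Finite.mem_toFinset] at hz
      have hzτ : z ≠ τ := by
        intro h
        exact hz.2 (h ▸ Metric.mem_ball_self hδ)
      have hmz : 0 < μ {z} := aux_atom μ τ hder hz.1 hzτ
      have hsq := aux_sq_tendsto φ horth hmz
      have h1 : Tendsto (fun n : ℕ => ((‖(φ n).eval z‖ ^ 2 : ℝ) : ℂ)) atTop (nhds ((0:ℝ):ℂ)) :=
        (Complex.continuous_ofReal.tendsto 0).comp hsq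
      rw [Complex.ofReal_zero] at h1
      have h2 := (h1.const_mul (f z - f τ)).const_smul ((μ {z}).toReal)
      simpa using h2
    have hevF : ∀ᶠ n in atTop, ‖∑ z ∈ Fs,
        (μ {z}).toReal • ((f z - f τ) * ((‖(φ n).eval z‖ ^ 2 : ℝ) : ℂ))‖ < ε/3 := by
      have := htermF (Metric.ball_mem_nhds 0 (show (0:ℝ) < ε/3 by positivity))
      filter_upwards [this] with n hn
      simpa [mem_ball_zero_iff] using hn
    filter_upwards [hevF] with n hn
    -- decompose the integral
    have hsplit : ∫ z, (f z - f τ) * ((‖(φ n).eval z‖ ^ 2 : ℝ) : ℂ) ∂μ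
        = (∫ z in Metric.ball τ δ, (f z - f τ) * ((‖(φ n).eval z‖ ^ 2 : ℝ) : ℂ) ∂μ)
        + ∫ z in (Metric.ball τ δ)ᶜ, (f z - f τ) * ((‖(φ n).eval z‖ ^ 2 : ℝ) : ℂ) ∂μ :=
      (integral_add_compl hB (hintg n)).symm
    have hpart2 : ∫ z in (Metric.ball τ δ)ᶜ, (f z - f τ) * ((‖(φ n).eval z‖ ^ 2 : ℝ) : ℂ) ∂μ
        = ∑ z ∈ Fs,
          (μ {z}).toReal • ((f z - f τ) * ((‖(φ n).eval z‖ ^ 2 : ℝ) : ℂ)) := by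
      rw [setIntegral_congr_set hae, ← hFscoe]
      exact integral_finset _ (Integrable.integrableOn (hintg n))
    have hpart1 : ‖∫ z in Metric.ball τ δ, (f z - f τ) * ((‖(φ n).eval z‖ ^ 2 : ℝ) : ℂ) ∂μ‖
        ≤ ε/3 := by
      calc ‖∫ z in Metric.ball τ δ, (f z - f τ) * ((‖(φ n).eval z‖ ^ 2 : ℝ) : ℂ) ∂μ‖
          ≤ ∫ z in Metric.ball τ δ, ‖(f z - f τ) * ((‖(φ n).eval z‖ ^ 2 : ℝ) : ℂ)‖ ∂μ :=
            norm_integral_le_integral_norm _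
        _ ≤ ∫ z in Metric.ball τ δ, (ε/3) * (‖(φ n).eval z‖ ^ 2 : ℝ) ∂μ := by
            apply setIntegral_mono_on
            · exact (hintg n).norm.integrableOn
            · exact ((hint_sq n).const_mul _).integrableOn
            · exact hB
            · intro z hz
              rw [norm_mul, Complex.norm_real, Real.norm_eq_abs, abs_of_nonneg (sq_nonneg _)]
              apply mul_le_mul_of_nonneg_right _ (sq_nonneg _)
              have := hδc (Metric.mem_ball.1 hz)
              rw [dist_eq_norm] at this
              linarith
        _ = (ε/3) * ∫ z in Metric.ball τ δ, (‖(φ n).eval z‖ ^ 2 : ℝ) ∂μ := integral_const_mul _ _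
        _ ≤ (ε/3) * 1 := by
            apply mul_le_mul_of_nonneg_left _ (by positivity)
            rw [← aux_intR_one φ horth n]
            exact setIntegral_le_integral (hint_sq n) (Eventually.of_forall fun z => sq_nonneg _)
        _ = ε/3 := mul_one _
    rw [hsplit, hpart2]
    calc ‖_ + _‖ ≤ _ + _ := norm_add_le _ _
      _ < ε/3 + ε/3 := by exact add_lt_add_of_le_of_lt hpart1 hn
      _ < ε := by linarith
  -- conclude
  have hdecomp : ∀ n : ℕ, ∫ z, f z * ((‖(φ n).eval z‖ ^ 2 : ℝ) : ℂ) ∂μ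
      = (∫ z, (f z - f τ) * ((‖(φ n).eval z‖ ^ 2 : ℝ) : ℂ) ∂μ) + f τ := by
    intro n
    have h1 : ∫ z, (f z - f τ) * ((‖(φ n).eval z‖ ^ 2 : ℝ) : ℂ) ∂μ
        = (∫ z, f z * ((‖(φ n).eval z‖ ^ 2 : ℝ) : ℂ) ∂μ)
          - ∫ z, f τ * ((‖(φ n).eval z‖ ^ 2 : ℝ) : ℂ) ∂μ := by
      rw [← integral_sub (hintf n) ((hintC n).const_mul _)]
      congr 1
      funext z
      ring
    have h2 : ∫ z, f τ * ((‖(φ n).eval z‖ ^ 2 : ℝ) : ℂ) ∂μ = f τ := by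
      rw [integral_const_mul, aux_intC_one φ horth n, mul_one]
    rw [h1, h2]
    ring
  have := hzero.add (tendsto_const_nhds (x := f τ))
  rw [zero_add] at this
  convert this using 2 with n
  exact hdecomp n
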